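/- For all 0 ≤ s ≤ t and x, y ∈ ℝ: (i) ∫₀ᵗ∫_ℝ (G_ν(t−r,x−z) − G_ν(t−r,y−z))² dz dr ≤ |x−y|/ν; (ii) ∫₀ˢ∫_ℝ (G_ν(t−r,x−z) − G_ν(s−r,x−z))² dz dr ≤ ((√2−1)/√π)·√(t−s)/√ν; (iii) ∫ₛᵗ∫_ℝ G_ν(t−r,x−z)² dz dr = (1/√π)·√(t−s)/√ν. -/

import Mathlib

open Real MeasureTheory Set Filter Topology intervalIntegral

noncomputable def heatKernel (ν t x : ℝ) : ℝ :=
  (1 / Real.sqrt (2 * Real.pi * ν * t)) * Real.exp (-(x ^ 2) / (2 * ν * t))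

lemma hk_nonpos {ν : ℝ} {t : ℝ} (ht : t ≤ 0) (hν : 0 < ν) (x : ℝ) : heatKernel ν t x = 0 := by
  unfold heatKernel
  rw [Real.sqrt_eq_zero'.mpr (by nlinarith [Real.pi_pos, mul_pos (mul_pos two_pos Real.pi_pos) hν])]
  simp

lemma hk_pos_expr {ν τ : ℝ} (hν : 0 < ν) (hτ : 0 < τ) (x : ℝ) :
    heatKernel ν τ x = Real.sqrt ((2 * Real.pi * ν * τ)⁻¹) * Real.exp (-(x ^ 2) / (2 * ν * τ)) := by
  unfold heatKernel
  rw [Real.sqrt_inv, one_div]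

lemma integrable_gauss_shift {k : ℝ} (hk : 0 < k) (m : ℝ) :
    Integrable (fun z : ℝ => Real.exp (-k * (z - m) ^ 2)) :=
  (integrable_exp_neg_mul_sq hk).comp_sub_right m

lemma integral_gauss_shift {k : ℝ} (hk : 0 < k) (m : ℝ) :
    ∫ z : ℝ, Real.exp (-k * (z - m) ^ 2) = Real.sqrt (Real.pi / k) := by
  rw [integral_sub_right_eq_self (fun w : ℝ => Real.exp (-k * w ^ 2)) m]
  exact integral_gaussian k

lemma hk_prod_pointwise {ν τ₁ τ₂ : ℝ} (hν : 0 < ν) (h1 : 0 < τ₁) (h2 : 0 < τ₂) (a b z : ℝ) :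
    heatKernel ν τ₁ (a - z) * heatKernel ν τ₂ (b - z) =
      (1 / Real.sqrt (2 * Real.pi * ν * τ₁)) * (1 / Real.sqrt (2 * Real.pi * ν * τ₂)) *
        Real.exp (-((a - b) ^ 2) / (2 * ν * (τ₁ + τ₂))) *
        Real.exp (-((τ₁ + τ₂) / (2 * ν * τ₁ * τ₂)) * (z - (a * τ₂ + b * τ₁) / (τ₁ + τ₂)) ^ 2) := by
  have h12 : (0:ℝ) < τ₁ + τ₂ := by linarith
  have hexp : (-((a - z) ^ 2) / (2 * ν * τ₁)) + (-((b - z) ^ 2) / (2 * ν * τ₂)) =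
      (-((a - b) ^ 2) / (2 * ν * (τ₁ + τ₂))) +
        (-((τ₁ + τ₂) / (2 * ν * τ₁ * τ₂)) * (z - (a * τ₂ + b * τ₁) / (τ₁ + τ₂)) ^ 2) := by
    field_simp
    ring
  unfold heatKernel
  calc (1 / Real.sqrt (2 * Real.pi * ν * τ₁) * Real.exp (-((a - z) ^ 2) / (2 * ν * τ₁))) *
        (1 / Real.sqrt (2 * Real.pi * ν * τ₂) * Real.exp (-((b - z) ^ 2) / (2 * ν * τ₂)))
      = (1 / Real.sqrt (2 * Real.pi * ν * τ₁)) * (1 / Real.sqrt (2 * Real.pi * ν * τ₂)) *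
        Real.exp ((-((a - z) ^ 2) / (2 * ν * τ₁)) + (-((b - z) ^ 2) / (2 * ν * τ₂))) := by
        rw [Real.exp_add]; ring
    _ = _ := by rw [hexp, Real.exp_add]; ring

lemma sqrt_const_eq {ν τ₁ τ₂ : ℝ} (hν : 0 < ν) (h1 : 0 < τ₁) (h2 : 0 < τ₂) :
    (1 / Real.sqrt (2 * Real.pi * ν * τ₁)) * (1 / Real.sqrt (2 * Real.pi * ν * τ₂)) *
      Real.sqrt (Real.pi / ((τ₁ + τ₂) / (2 * ν * τ₁ * τ₂))) =
      Real.sqrt ((2 * Real.pi * ν * (τ₁ + τ₂))⁻¹) := by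
  have h12 : (0:ℝ) < τ₁ + τ₂ := by linarith
  rw [one_div, one_div, ← Real.sqrt_inv, ← Real.sqrt_inv,
    ← Real.sqrt_mul (by positivity), ← Real.sqrt_mul (by positivity)]
  congr 1
  field_simp

lemma integral_hk_prod {ν τ₁ τ₂ : ℝ} (hν : 0 < ν) (h1 : 0 < τ₁) (h2 : 0 < τ₂) (a b : ℝ) :
    ∫ z : ℝ, heatKernel ν τ₁ (a - z) * heatKernel ν τ₂ (b - z) =
      heatKernel ν (τ₁ + τ₂) (a - b) := by
  have h12 : 0 < τ₁ + τ₂ := by linarith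
  have hk : 0 < (τ₁ + τ₂) / (2 * ν * τ₁ * τ₂) := by positivity
  simp_rw [hk_prod_pointwise hν h1 h2 a b]
  rw [MeasureTheory.integral_const_mul, integral_gauss_shift hk, hk_pos_expr hν h12]
  calc (1 / Real.sqrt (2 * Real.pi * ν * τ₁)) * (1 / Real.sqrt (2 * Real.pi * ν * τ₂)) *
        Real.exp (-((a - b) ^ 2) / (2 * ν * (τ₁ + τ₂))) *
        Real.sqrt (Real.pi / ((τ₁ + τ₂) / (2 * ν * τ₁ * τ₂)))
      = ((1 / Real.sqrt (2 * Real.pi * ν * τ₁)) * (1 / Real.sqrt (2 * Real.pi * ν * τ₂)) *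
        Real.sqrt (Real.pi / ((τ₁ + τ₂) / (2 * ν * τ₁ * τ₂)))) *
        Real.exp (-((a - b) ^ 2) / (2 * ν * (τ₁ + τ₂))) := by ring
    _ = _ := by rw [sqrt_const_eq hν h1 h2]

lemma integrable_hk_prod {ν τ₁ τ₂ : ℝ} (hν : 0 < ν) (h1 : 0 < τ₁) (h2 : 0 < τ₂) (a b : ℝ) :
    Integrable (fun z : ℝ => heatKernel ν τ₁ (a - z) * heatKernel ν τ₂ (b - z)) := by
  have hk : 0 < (τ₁ + τ₂) / (2 * ν * τ₁ * τ₂) := by positivity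
  have := ((integrable_gauss_shift hk ((a * τ₂ + b * τ₁) / (τ₁ + τ₂))).const_mul
    ((1 / Real.sqrt (2 * Real.pi * ν * τ₁)) * (1 / Real.sqrt (2 * Real.pi * ν * τ₂)) *
        Real.exp (-((a - b) ^ 2) / (2 * ν * (τ₁ + τ₂)))))
  exact this.congr (by
    filter_upwards with z
    rw [hk_prod_pointwise hν h1 h2 a b z])

lemma hk_zero_val {ν σ : ℝ} (hν : 0 < ν) (hσ : 0 < σ) :
    heatKernel ν (σ + σ) 0 = 1 / (2 * Real.sqrt (Real.pi * ν * σ)) := by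
  unfold heatKernel
  rw [show 2 * Real.pi * ν * (σ + σ) = 2 ^ 2 * (Real.pi * ν * σ) by ring,
    Real.sqrt_mul (by positivity), Real.sqrt_sq (by norm_num)]
  norm_num

lemma integral_hk_sub_sq {ν τ₁ τ₂ : ℝ} (hν : 0 < ν) (h1 : 0 < τ₁) (h2 : 0 < τ₂) (a b : ℝ) :
    ∫ z : ℝ, (heatKernel ν τ₁ (a - z) - heatKernel ν τ₂ (b - z)) ^ 2 =
      heatKernel ν (τ₁ + τ₁) 0 + heatKernel ν (τ₂ + τ₂) 0 -
        2 * heatKernel ν (τ₁ + τ₂) (a - b) := by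
  have I1 := integrable_hk_prod hν h1 h1 a a
  have I2 := integrable_hk_prod hν h2 h2 b b
  have I12 := integrable_hk_prod hν h1 h2 a b
  have e : ∀ z : ℝ, (heatKernel ν τ₁ (a - z) - heatKernel ν τ₂ (b - z)) ^ 2 =
      (heatKernel ν τ₁ (a - z) * heatKernel ν τ₁ (a - z) +
        heatKernel ν τ₂ (b - z) * heatKernel ν τ₂ (b - z)) -
      2 * (heatKernel ν τ₁ (a - z) * heatKernel ν τ₂ (b - z)) := fun z => by ring
  have I3 : Integrable (fun z : ℝ => heatKernel ν τ₁ (a - z) * heatKernel ν τ₁ (a - z) +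
      heatKernel ν τ₂ (b - z) * heatKernel ν τ₂ (b - z)) := I1.add I2
  have I4 : Integrable (fun z : ℝ => 2 * (heatKernel ν τ₁ (a - z) * heatKernel ν τ₂ (b - z))) :=
    I12.const_mul 2
  simp_rw [e]
  rw [integral_sub I3 I4, integral_add I1 I2, MeasureTheory.integral_const_mul,
    integral_hk_prod hν h1 h1, integral_hk_prod hν h2 h2, integral_hk_prod hν h1 h2, sub_self,
    sub_self]

lemma hk_sq_formula {ν : ℝ} (hν : 0 < ν) {τ : ℝ} (hτ : 0 ≤ τ) (x : ℝ) :
    ∫ z : ℝ, heatKernel ν τ (x - z) ^ 2 =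
      (1 / (2 * Real.sqrt (Real.pi * ν))) * τ ^ (-(1:ℝ)/2) := by
  rcases eq_or_lt_of_le hτ with h | h
  · rw [← h]
    simp [hk_nonpos le_rfl hν, Real.zero_rpow (by norm_num : (-(1:ℝ)/2) ≠ 0)]
  · have e : ∀ z : ℝ, heatKernel ν τ (x - z) ^ 2 =
        heatKernel ν τ (x - z) * heatKernel ν τ (x - z) := fun z => by ring
    simp_rw [e]
    rw [integral_hk_prod hν h h x x, sub_self, hk_zero_val hν h,
      Real.sqrt_mul (by positivity : (0:ℝ) ≤ Real.pi * ν),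
      show (-(1:ℝ)/2) = -((1:ℝ)/2) by norm_num, Real.rpow_neg h.le, ← Real.sqrt_eq_rpow]
    rw [one_div, one_div, mul_inv, mul_inv]
    ring

lemma part3 {ν : ℝ} (hν : 0 < ν) {s t : ℝ} (hst : s ≤ t) (x : ℝ) :
    (∫ r in s..t, ∫ z : ℝ, heatKernel ν (t - r) (x - z) ^ 2) =
      (1 / Real.sqrt Real.pi) * (Real.sqrt (t - s) / Real.sqrt ν) := by
  have hcong : Set.EqOn (fun r => ∫ z : ℝ, heatKernel ν (t - r) (x - z) ^ 2)
      (fun r => (1 / (2 * Real.sqrt (Real.pi * ν))) * (t - r) ^ (-(1:ℝ)/2)) (Set.uIcc s t) := by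
    intro r hr
    rw [Set.uIcc_of_le hst] at hr
    exact hk_sq_formula hν (by linarith [hr.2]) x
  rw [intervalIntegral.integral_congr hcong]
  simp_rw [intervalIntegral.integral_const_mul]
  rw [intervalIntegral.integral_comp_sub_left (fun u => u ^ (-(1:ℝ)/2)) t, sub_self,
    integral_rpow (Or.inl (by norm_num)), Real.zero_rpow (by norm_num : (-(1:ℝ)/2 + 1) ≠ 0)]
  rw [show (-(1:ℝ)/2 + 1) = (1:ℝ)/2 by norm_num, ← Real.sqrt_eq_rpow,
    Real.sqrt_mul (Real.pi_pos.le)]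
  have h1 : Real.sqrt Real.pi ≠ 0 := by positivity
  have h2 : Real.sqrt ν ≠ 0 := by positivity
  field_simp
  ring

lemma hk_pair {ν τ : ℝ} (hν : 0 < ν) (hτ : 0 < τ) :
    heatKernel ν (τ + τ) 0 = (1 / (2 * Real.sqrt (Real.pi * ν))) * τ ^ (-(1:ℝ)/2) := by
  rw [hk_zero_val hν hτ, Real.sqrt_mul (by positivity : (0:ℝ) ≤ Real.pi * ν),
    show (-(1:ℝ)/2) = -((1:ℝ)/2) by norm_num, Real.rpow_neg hτ.le, ← Real.sqrt_eq_rpow]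
  rw [one_div, one_div, mul_inv, mul_inv]
  ring

lemma hk_at_zero {ν u : ℝ} (hν : 0 < ν) (hu : 0 < u) :
    heatKernel ν u 0 = (1 / Real.sqrt (2 * Real.pi * ν)) * u ^ (-(1:ℝ)/2) := by
  unfold heatKernel
  rw [show 2 * Real.pi * ν * u = (2 * Real.pi * ν) * u by ring,
    Real.sqrt_mul (by positivity : (0:ℝ) ≤ 2 * Real.pi * ν),
    show (-(1:ℝ)/2) = -((1:ℝ)/2) by norm_num, Real.rpow_neg hu.le, ← Real.sqrt_eq_rpow]
  simp [mul_inv]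
  ring

lemma part2 {ν : ℝ} (hν : 0 < ν) {s t : ℝ} (hs : 0 ≤ s) (hst : s ≤ t) (x : ℝ) :
    (∫ r in (0:ℝ)..s, ∫ z : ℝ,
        (heatKernel ν (t - r) (x - z) - heatKernel ν (s - r) (x - z)) ^ 2) ≤
      ((Real.sqrt 2 - 1) / Real.sqrt Real.pi) * (Real.sqrt (t - s) / Real.sqrt ν) := by
  have ht0 : 0 ≤ t := le_trans hs hst
  set e : ℝ := -(1:ℝ)/2 with he
  set A : ℝ := 1 / (2 * Real.sqrt (Real.pi * ν)) with hA
  set B : ℝ := Real.sqrt 2 / Real.sqrt (Real.pi * ν) with hB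
  set F : ℝ → ℝ := fun r => A * (t - r) ^ e + A * (s - r) ^ e - B * (t + s - 2*r) ^ e with hF
  -- a.e. congruence
  have hae : ∀ᵐ r : ℝ, r ≠ s := by
    rw [ae_iff]
    simp only [not_not]
    simpa using Real.volume_singleton (x := s)
  have hcong : (∫ r in (0:ℝ)..s, ∫ z : ℝ,
        (heatKernel ν (t - r) (x - z) - heatKernel ν (s - r) (x - z)) ^ 2) =
      ∫ r in (0:ℝ)..s, F r := by
    apply intervalIntegral.integral_congr_ae
    filter_upwards [hae] with r hr hmem
    rw [Set.uIoc_of_le hs] at hmem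
    have hr1 : 0 < t - r := by rcases hmem with ⟨h1, h2⟩; have := lt_of_le_of_ne h2 hr; linarith
    have hr2 : 0 < s - r := by
      rcases hmem with ⟨h1, h2⟩; have := lt_of_le_of_ne h2 hr
      linarith
    rw [integral_hk_sub_sq hν hr1 hr2 x x, sub_self,
      show (t - r) + (s - r) = t + s - 2*r by ring]
    have hu : 0 < t + s - 2*r := by linarith
    have h2' : Real.sqrt (2 * Real.pi * ν) = Real.sqrt 2 * Real.sqrt (Real.pi * ν) := by
      rw [← Real.sqrt_mul (by norm_num : (0:ℝ) ≤ 2)]; ring_nf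
    have hs2 : Real.sqrt 2 ≠ 0 := by positivity
    have htwo : 2 * heatKernel ν (t + s - 2*r) 0 =
        (Real.sqrt 2 / Real.sqrt (Real.pi * ν)) * (t + s - 2*r) ^ e := by
      rw [hk_at_zero hν hu, h2', he]
      have key : (2:ℝ) * (Real.sqrt 2)⁻¹ = Real.sqrt 2 := by
        rw [mul_inv_eq_iff_eq_mul₀ hs2, Real.mul_self_sqrt (by norm_num)]
      linear_combination ((Real.sqrt (Real.pi * ν))⁻¹ * (t + s - 2*r) ^ (-(1:ℝ)/2)) * key
    rw [hk_pair hν hr1, hk_pair hν hr2, htwo, hF, hA, hB]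
  rw [hcong]
  -- integrability of the three pieces
  have he1 : (-1:ℝ) < e := by norm_num [he]
  have J1 : IntervalIntegrable (fun r => (t - r) ^ e) volume 0 s := by
    have := (intervalIntegrable_rpow' (a := t) (b := t - s) he1).comp_sub_left t
    simpa using this
  have J2 : IntervalIntegrable (fun r => (s - r) ^ e) volume 0 s := by
    have := (intervalIntegrable_rpow' (a := s) (b := s - s) he1).comp_sub_left s
    simpa using this
  have J3 : IntervalIntegrable (fun r => (t + s - 2*r) ^ e) volume 0 s := by
    have h0 : IntervalIntegrable (fun y => (t + s - y) ^ e) volume 0 (2*s) := by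
      have := (intervalIntegrable_rpow' (a := t + s) (b := t - s) he1).comp_sub_left (t + s)
      simpa [show t + s - (t - s) = 2*s by ring] using this
    have := h0.comp_mul_left (c := 2)
    simpa using this
  -- compute the integral
  have hI1 : ∫ r in (0:ℝ)..s, (t - r) ^ e =
      2 * Real.sqrt t - 2 * Real.sqrt (t - s) := by
    rw [intervalIntegral.integral_comp_sub_left (fun u => u ^ e) t, sub_zero,
      integral_rpow (Or.inl he1)]
    rw [he, show (-(1:ℝ)/2 + 1) = (1:ℝ)/2 by norm_num, ← Real.sqrt_eq_rpow, ← Real.sqrt_eq_rpow]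
    ring
  have hI2 : ∫ r in (0:ℝ)..s, (s - r) ^ e = 2 * Real.sqrt s := by
    rw [intervalIntegral.integral_comp_sub_left (fun u => u ^ e) s, sub_zero, sub_self,
      integral_rpow (Or.inl he1)]
    rw [he, show (-(1:ℝ)/2 + 1) = (1:ℝ)/2 by norm_num, ← Real.sqrt_eq_rpow,
      Real.zero_rpow (by norm_num : ((1:ℝ)/2) ≠ 0)]
    ring
  have hI3 : ∫ r in (0:ℝ)..s, (t + s - 2*r) ^ e =
      Real.sqrt (t + s) - Real.sqrt (t - s) := by
    rw [intervalIntegral.integral_comp_sub_mul (fun u => u ^ e) (by norm_num : (2:ℝ) ≠ 0) (t + s)]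
    rw [mul_zero, sub_zero, show t + s - 2*s = t - s by ring, integral_rpow (Or.inl he1)]
    rw [he, show (-(1:ℝ)/2 + 1) = (1:ℝ)/2 by norm_num, ← Real.sqrt_eq_rpow, ← Real.sqrt_eq_rpow]
    simp
    ring
  have hsplit : ∫ r in (0:ℝ)..s, F r =
      A * (2 * Real.sqrt t - 2 * Real.sqrt (t - s)) + A * (2 * Real.sqrt s) -
        B * (Real.sqrt (t + s) - Real.sqrt (t - s)) := by
    rw [hF]
    rw [intervalIntegral.integral_sub ((J1.const_mul A).add (J2.const_mul A)) (J3.const_mul B),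
      intervalIntegral.integral_add (J1.const_mul A) (J2.const_mul A),
      intervalIntegral.integral_const_mul, intervalIntegral.integral_const_mul,
      intervalIntegral.integral_const_mul, hI1, hI2, hI3]
  rw [hsplit]
  -- final inequality
  have key : Real.sqrt t + Real.sqrt s ≤ Real.sqrt 2 * Real.sqrt (t + s) := by
    rw [← Real.sqrt_mul (by norm_num : (0:ℝ) ≤ 2)]
    rw [Real.le_sqrt (by positivity) (by positivity)]
    nlinarith [sq_nonneg (Real.sqrt t - Real.sqrt s), Real.sq_sqrt ht0, Real.sq_sqrt hs,
      Real.sqrt_nonneg t, Real.sqrt_nonneg s]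
  have hπν : Real.sqrt (Real.pi * ν) = Real.sqrt Real.pi * Real.sqrt ν :=
    Real.sqrt_mul Real.pi_pos.le ν
  have hπ0 : 0 < Real.sqrt Real.pi := Real.sqrt_pos.mpr Real.pi_pos
  have hν0 : 0 < Real.sqrt ν := Real.sqrt_pos.mpr hν
  have hgoal : A * (2 * Real.sqrt t - 2 * Real.sqrt (t - s)) + A * (2 * Real.sqrt s) -
      B * (Real.sqrt (t + s) - Real.sqrt (t - s)) =
      (Real.sqrt t + Real.sqrt s - Real.sqrt (t - s) - Real.sqrt 2 * Real.sqrt (t + s) +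
        Real.sqrt 2 * Real.sqrt (t - s)) / (Real.sqrt Real.pi * Real.sqrt ν) := by
    rw [hA, hB, hπν]
    field_simp
    ring
  have hrhs : ((Real.sqrt 2 - 1) / Real.sqrt Real.pi) * (Real.sqrt (t - s) / Real.sqrt ν) =
      ((Real.sqrt 2 - 1) * Real.sqrt (t - s)) / (Real.sqrt Real.pi * Real.sqrt ν) := by
    rw [div_mul_div_comm]
  rw [hgoal, hrhs]
  rw [div_le_div_iff_of_pos_right (by positivity : 0 < Real.sqrt Real.pi * Real.sqrt ν)]
  nlinarith [key]

lemma one_sub_exp_neg_le {x : ℝ} (hx : 0 ≤ x) : 1 - Real.exp (-x) ≤ x := by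
  nlinarith [Real.add_one_le_exp (-x)]

lemma one_sub_exp_neg_nonneg {x : ℝ} (hx : 0 ≤ x) : 0 ≤ 1 - Real.exp (-x) := by
  have : Real.exp (-x) ≤ Real.exp 0 := Real.exp_le_exp.mpr (by linarith)
  rw [Real.exp_zero] at this
  linarith

lemma meas_psi2 {c : ℝ} : Measurable (fun v : ℝ => v ^ (-(1:ℝ)/2) * Real.exp (-c * v)) :=
  (measurable_id.pow_const _).mul ((measurable_id.const_mul (-c)).exp)

lemma int_psi2 {c : ℝ} (hc : 0 < c) :
    IntegrableOn (fun v : ℝ => v ^ (-(1:ℝ)/2) * Real.exp (-c * v)) (Set.Ioi 0) := by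
  rw [← Set.Ioc_union_Ioi_eq_Ioi (zero_le_one : (0:ℝ) ≤ 1)]
  apply IntegrableOn.union
  · have hbase : IntegrableOn (fun v : ℝ => v ^ (-(1:ℝ)/2)) (Set.Ioc 0 1) := by
      have := intervalIntegrable_rpow' (a := (0:ℝ)) (b := 1) (by norm_num : (-1:ℝ) < -(1:ℝ)/2)
      rwa [intervalIntegrable_iff_integrableOn_Ioc_of_le zero_le_one] at this
    apply hbase.mono' meas_psi2.aestronglyMeasurable.restrict
    rw [ae_restrict_iff' measurableSet_Ioc]
    filter_upwards with v hv
    have hv0 : 0 < v := hv.1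
    rw [Real.norm_eq_abs, abs_mul, abs_of_nonneg (Real.rpow_nonneg hv0.le _),
      abs_of_nonneg (Real.exp_nonneg _)]
    nlinarith [Real.exp_le_one_iff.mpr (by nlinarith : -c * v ≤ 0),
      Real.rpow_nonneg hv0.le (-(1:ℝ)/2)]
  · have hbase : IntegrableOn (fun v : ℝ => Real.exp (-c * v)) (Set.Ioi 1) :=
      exp_neg_integrableOn_Ioi 1 hc
    apply hbase.mono' meas_psi2.aestronglyMeasurable.restrict
    rw [ae_restrict_iff' measurableSet_Ioi]
    filter_upwards with v hv
    have hv1 : (1:ℝ) ≤ v := le_of_lt hv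
    rw [Real.norm_eq_abs, abs_mul, abs_of_nonneg (Real.rpow_nonneg (by linarith) _),
      abs_of_nonneg (Real.exp_nonneg _)]
    have : v ^ (-(1:ℝ)/2) ≤ 1 :=
      Real.rpow_le_one_of_one_le_of_nonpos hv1 (by norm_num)
    nlinarith [Real.exp_nonneg (-c * v)]

lemma meas_psi {c : ℝ} : Measurable (fun v : ℝ => v ^ (-(3:ℝ)/2) * (1 - Real.exp (-c * v))) :=
  (measurable_id.pow_const _).mul (measurable_const.sub ((measurable_id.const_mul (-c)).exp))

lemma int_psi {c : ℝ} (hc : 0 < c) :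
    IntegrableOn (fun v : ℝ => v ^ (-(3:ℝ)/2) * (1 - Real.exp (-c * v))) (Set.Ioi 0) := by
  rw [← Set.Ioc_union_Ioi_eq_Ioi (zero_le_one : (0:ℝ) ≤ 1)]
  apply IntegrableOn.union
  · have hbase : IntegrableOn (fun v : ℝ => c * v ^ (-(1:ℝ)/2)) (Set.Ioc 0 1) := by
      have := intervalIntegrable_rpow' (a := (0:ℝ)) (b := 1) (by norm_num : (-1:ℝ) < -(1:ℝ)/2)
      rw [intervalIntegrable_iff_integrableOn_Ioc_of_le zero_le_one] at this
      exact this.const_mul c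
    apply hbase.mono' meas_psi.aestronglyMeasurable.restrict
    rw [ae_restrict_iff' measurableSet_Ioc]
    filter_upwards with v hv
    have hv0 : 0 < v := hv.1
    have hcv : 0 ≤ c * v := by positivity
    rw [Real.norm_eq_abs, abs_mul, abs_of_nonneg (Real.rpow_nonneg hv0.le _),
      abs_of_nonneg (by simpa using one_sub_exp_neg_nonneg hcv)]
    have hle : 1 - Real.exp (-c * v) ≤ c * v := by
      simpa [neg_mul] using one_sub_exp_neg_le hcv
    have hsplit : v ^ (-(3:ℝ)/2) * (c * v) = c * v ^ (-(1:ℝ)/2) := by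
      rw [show (-(1:ℝ)/2) = (-(3:ℝ)/2) + 1 by norm_num, Real.rpow_add hv0, Real.rpow_one]
      ring
    nlinarith [Real.rpow_nonneg hv0.le (-(3:ℝ)/2)]
  · have hbase : IntegrableOn (fun v : ℝ => v ^ (-(3:ℝ)/2)) (Set.Ioi 1) :=
      integrableOn_Ioi_rpow_of_lt (by norm_num) one_pos
    apply hbase.mono' meas_psi.aestronglyMeasurable.restrict
    rw [ae_restrict_iff' measurableSet_Ioi]
    filter_upwards with v hv
    have hv0 : (0:ℝ) < v := lt_trans one_pos hv
    have hcv : 0 ≤ c * v := by positivity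
    rw [Real.norm_eq_abs, abs_mul, abs_of_nonneg (Real.rpow_nonneg hv0.le _),
      abs_of_nonneg (by simpa using one_sub_exp_neg_nonneg hcv)]
    have h1 : 1 - Real.exp (-c * v) ≤ 1 := by
      nlinarith [Real.exp_nonneg (-c * v)]
    nlinarith [Real.rpow_nonneg hv0.le (-(3:ℝ)/2)]

lemma meas_phi0 {c : ℝ} : Measurable (fun u : ℝ => u ^ (-(1:ℝ)/2) * (1 - Real.exp (-(c/u)))) :=
  (measurable_id.pow_const _).mul
    (measurable_const.sub ((measurable_const.div measurable_id).neg.exp))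

lemma int_phi0 {c : ℝ} (hc : 0 < c) :
    IntegrableOn (fun u : ℝ => u ^ (-(1:ℝ)/2) * (1 - Real.exp (-(c/u)))) (Set.Ioi 0) := by
  rw [← Set.Ioc_union_Ioi_eq_Ioi hc.le]
  apply IntegrableOn.union
  · have hbase : IntegrableOn (fun v : ℝ => v ^ (-(1:ℝ)/2)) (Set.Ioc 0 c) := by
      have := intervalIntegrable_rpow' (a := (0:ℝ)) (b := c) (by norm_num : (-1:ℝ) < -(1:ℝ)/2)
      rwa [intervalIntegrable_iff_integrableOn_Ioc_of_le hc.le] at this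
    apply hbase.mono' meas_phi0.aestronglyMeasurable.restrict
    rw [ae_restrict_iff' measurableSet_Ioc]
    filter_upwards with u hu
    have hu0 : 0 < u := hu.1
    have hcu : 0 ≤ c / u := by positivity
    rw [Real.norm_eq_abs, abs_mul, abs_of_nonneg (Real.rpow_nonneg hu0.le _),
      abs_of_nonneg (one_sub_exp_neg_nonneg hcu)]
    have h1 : 1 - Real.exp (-(c/u)) ≤ 1 := by
      nlinarith [Real.exp_nonneg (-(c/u))]
    nlinarith [Real.rpow_nonneg hu0.le (-(1:ℝ)/2), one_sub_exp_neg_nonneg hcu]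
  · have hbase : IntegrableOn (fun v : ℝ => c * v ^ (-(3:ℝ)/2)) (Set.Ioi c) :=
      (integrableOn_Ioi_rpow_of_lt (by norm_num) hc).const_mul c
    apply hbase.mono' meas_phi0.aestronglyMeasurable.restrict
    rw [ae_restrict_iff' measurableSet_Ioi]
    filter_upwards with u hu
    have hu0 : (0:ℝ) < u := lt_trans hc hu
    have hcu : 0 ≤ c / u := by positivity
    rw [Real.norm_eq_abs, abs_mul, abs_of_nonneg (Real.rpow_nonneg hu0.le _),
      abs_of_nonneg (one_sub_exp_neg_nonneg hcu)]
    have hle : 1 - Real.exp (-(c/u)) ≤ c / u := one_sub_exp_neg_le hcu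
    have hsplit : u ^ (-(1:ℝ)/2) * (c / u) = c * u ^ (-(3:ℝ)/2) := by
      rw [show (-(3:ℝ)/2) = (-(1:ℝ)/2) - 1 by norm_num, Real.rpow_sub hu0, Real.rpow_one]
      ring
    nlinarith [Real.rpow_nonneg hu0.le (-(1:ℝ)/2), one_sub_exp_neg_nonneg hcu]

lemma gamma_val {c : ℝ} (hc : 0 < c) :
    ∫ v in Set.Ioi (0:ℝ), v ^ (-(1:ℝ)/2) * Real.exp (-c * v) =
      Real.sqrt Real.pi / Real.sqrt c := by
  have h := integral_rpow_mul_exp_neg_mul_rpow (p := 1) (q := -(1:ℝ)/2) (b := c)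
    one_pos (by norm_num) hc
  rw [show ∫ x in Set.Ioi (0:ℝ), x ^ (-(1:ℝ)/2) * Real.exp (-c * x ^ (1:ℝ)) =
      ∫ v in Set.Ioi (0:ℝ), v ^ (-(1:ℝ)/2) * Real.exp (-c * v) from
    setIntegral_congr_fun measurableSet_Ioi (fun x _ => by rw [Real.rpow_one])] at h
  rw [h]
  rw [show (-(-(1:ℝ)/2 + 1) / 1) = -((1:ℝ)/2) by norm_num,
    show ((-(1:ℝ)/2 + 1) / 1) = (1:ℝ)/2 by norm_num, Real.rpow_neg hc.le,
    ← Real.sqrt_eq_rpow, Real.Gamma_one_half_eq]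
  field_simp

lemma ibp_val {c : ℝ} (hc : 0 < c) :
    ∫ v in Set.Ioi (0:ℝ), v ^ (-(3:ℝ)/2) * (1 - Real.exp (-c * v)) =
      2 * c * (Real.sqrt Real.pi / Real.sqrt c) := by
  set g : ℝ → ℝ := fun v => -2 * v ^ (-(1:ℝ)/2) * (1 - Real.exp (-c * v)) with hg
  set g' : ℝ → ℝ := fun v => v ^ (-(3:ℝ)/2) * (1 - Real.exp (-c * v)) -
    (2 * c) * (v ^ (-(1:ℝ)/2) * Real.exp (-c * v)) with hg'
  have hg0 : g 0 = 0 := by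
    rw [hg]
    simp [Real.zero_rpow (by norm_num : (-(1:ℝ)/2) ≠ 0)]
  have hderiv : ∀ v ∈ Set.Ioi (0:ℝ), HasDerivAt g (g' v) v := by
    intro v hv
    have hv0 : (0:ℝ) < v := hv
    have h1 : HasDerivAt (fun v : ℝ => v ^ (-(1:ℝ)/2)) ((-(1:ℝ)/2) * v ^ (-(1:ℝ)/2 - 1)) v :=
      Real.hasDerivAt_rpow_const (Or.inl hv0.ne')
    have h2 : HasDerivAt (fun v : ℝ => 1 - Real.exp (-c * v)) (c * Real.exp (-c * v)) v := by
      have h := (((hasDerivAt_id v).const_mul (-c)).exp).const_sub 1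
      refine h.congr_deriv ?_
      simp only [id_eq, mul_one]
      ring
    have h3 := (h1.mul h2).const_mul (-2 : ℝ)
    have hfun : (fun y : ℝ => (-2 : ℝ) * (y ^ (-(1:ℝ)/2) * (1 - Real.exp (-c * y)))) = g := by
      rw [hg]
      funext y
      ring
    simp only [Pi.mul_apply] at h3
    rw [hfun] at h3
    refine h3.congr_deriv ?_
    rw [hg']
    dsimp only
    rw [show (-(1:ℝ)/2 - 1) = -(3:ℝ)/2 by norm_num]
    ring
  have hcont : ContinuousWithinAt g (Set.Ici 0) 0 := by
    unfold ContinuousWithinAt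
    rw [hg0]
    apply squeeze_zero_norm' (a := fun v : ℝ => (2 * c) * v ^ ((1:ℝ)/2))
    · filter_upwards [self_mem_nhdsWithin] with v (hv : v ∈ Set.Ici (0:ℝ))
      rcases eq_or_lt_of_le (Set.mem_Ici.mp hv) with h | h
      · rw [hg]
        dsimp only
        rw [← h, Real.zero_rpow (by norm_num : (-(1:ℝ)/2) ≠ 0),
          Real.zero_rpow (by norm_num : ((1:ℝ)/2) ≠ 0)]
        simp
      · have hcv : 0 ≤ c * v := by positivity
        have hnn : 0 ≤ 1 - Real.exp (-c * v) := by
          simpa [neg_mul] using one_sub_exp_neg_nonneg hcv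
        have hle : 1 - Real.exp (-c * v) ≤ c * v := by
          simpa [neg_mul] using one_sub_exp_neg_le hcv
        have hval : ‖g v‖ = 2 * v ^ (-(1:ℝ)/2) * (1 - Real.exp (-c * v)) := by
          rw [hg, Real.norm_eq_abs]
          dsimp only
          rw [abs_of_nonpos (by nlinarith [Real.rpow_nonneg h.le (-(1:ℝ)/2)])]
          ring
        rw [hval]
        have hsplit : v ^ (-(1:ℝ)/2) * (c * v) = c * v ^ ((1:ℝ)/2) := by
          rw [show ((1:ℝ)/2) = (-(1:ℝ)/2) + 1 by norm_num, Real.rpow_add h, Real.rpow_one]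
          ring
        nlinarith [Real.rpow_nonneg h.le (-(1:ℝ)/2), Real.rpow_nonneg h.le ((1:ℝ)/2)]
    · have hc1 : ContinuousAt (fun v : ℝ => v ^ ((1:ℝ)/2)) 0 :=
        Real.continuousAt_rpow_const 0 _ (Or.inr (by norm_num))
      have h : Tendsto (fun v : ℝ => (2 * c) * v ^ ((1:ℝ)/2)) (𝓝[Set.Ici 0] 0)
          (𝓝 ((2 * c) * (0:ℝ) ^ ((1:ℝ)/2))) :=
        (hc1.tendsto.mono_left nhdsWithin_le_nhds).const_mul (2 * c)
      rw [Real.zero_rpow (by norm_num : ((1:ℝ)/2) ≠ 0), mul_zero] at h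
      exact h
  have htop : Tendsto g atTop (𝓝 0) := by
    apply squeeze_zero_norm' (a := fun v : ℝ => 2 * v ^ (-(1:ℝ)/2))
    · filter_upwards [Filter.eventually_ge_atTop (1:ℝ)] with v hv
      have hv0 : (0:ℝ) < v := lt_of_lt_of_le one_pos hv
      have hcv : 0 ≤ c * v := by positivity
      have hnn : 0 ≤ 1 - Real.exp (-c * v) := by
        simpa [neg_mul] using one_sub_exp_neg_nonneg hcv
      have hval : ‖g v‖ = 2 * v ^ (-(1:ℝ)/2) * (1 - Real.exp (-c * v)) := by
        rw [hg, Real.norm_eq_abs]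
        dsimp only
        rw [abs_of_nonpos (by nlinarith [Real.rpow_nonneg hv0.le (-(1:ℝ)/2)])]
        ring
      rw [hval]
      have h1 : 1 - Real.exp (-c * v) ≤ 1 := by nlinarith [Real.exp_nonneg (-c * v)]
      nlinarith [Real.rpow_nonneg hv0.le (-(1:ℝ)/2)]
    · have h := (tendsto_rpow_neg_atTop (by norm_num : (0:ℝ) < 1/2)).const_mul (2:ℝ)
      rw [mul_zero] at h
      convert h using 2 with v
      norm_num
  have g'int : IntegrableOn g' (Set.Ioi 0) := (int_psi hc).sub ((int_psi2 hc).const_mul (2*c))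
  have hibp := integral_Ioi_of_hasDerivAt_of_tendsto hcont hderiv g'int htop
  rw [hg0, sub_zero] at hibp
  have hsplit : ∫ v in Set.Ioi (0:ℝ), g' v =
      (∫ v in Set.Ioi (0:ℝ), v ^ (-(3:ℝ)/2) * (1 - Real.exp (-c * v))) -
        (2*c) * ∫ v in Set.Ioi (0:ℝ), v ^ (-(1:ℝ)/2) * Real.exp (-c * v) := by
    rw [hg']
    rw [integral_sub (int_psi hc) ((int_psi2 hc).const_mul (2*c)), MeasureTheory.integral_const_mul]
  rw [hibp, gamma_val hc] at hsplit
  linarith [hsplit]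

lemma subst_val {c : ℝ} (hc : 0 < c) :
    ∫ u in Set.Ioi (0:ℝ), u ^ (-(1:ℝ)/2) * (1 - Real.exp (-(c/u))) =
      ∫ v in Set.Ioi (0:ℝ), v ^ (-(3:ℝ)/2) * (1 - Real.exp (-c * v)) := by
  rw [← integral_comp_rpow_Ioi (fun v => v ^ (-(3:ℝ)/2) * (1 - Real.exp (-c * v)))
    (by norm_num : (-1 : ℝ) ≠ 0)]
  apply setIntegral_congr_fun measurableSet_Ioi
  intro u hu
  have hu0 : (0:ℝ) < u := hu
  have h1 : u ^ (-1 : ℝ) = u⁻¹ := by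
    rw [Real.rpow_neg hu0.le, Real.rpow_one]
  have h2 : (u⁻¹ : ℝ) ^ (-(3:ℝ)/2) = u ^ ((3:ℝ)/2) := by
    rw [← h1, ← Real.rpow_mul hu0.le]
    norm_num
  have h3 : u ^ (-(1:ℝ) - 1) = u ^ (-(2:ℝ)) := by norm_num
  simp only [smul_eq_mul]
  rw [h1, h2, h3, abs_of_nonpos (by norm_num : (-1:ℝ) ≤ 0),
    show -c * u⁻¹ = -(c/u) by rw [div_eq_mul_inv]; ring]
  have h4 : u ^ (-(2:ℝ)) * u ^ ((3:ℝ)/2) = u ^ (-(1:ℝ)/2) := by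
    rw [← Real.rpow_add hu0]
    norm_num
  linear_combination (-(1 - Real.exp (-(c/u)))) * h4

lemma hk_pair_x {ν τ : ℝ} (hν : 0 < ν) (hτ : 0 < τ) (a : ℝ) :
    heatKernel ν (τ + τ) a =
      (1 / (2 * Real.sqrt (Real.pi * ν))) *
        (τ ^ (-(1:ℝ)/2) * Real.exp (-(a^2/(4*ν)/τ))) := by
  unfold heatKernel
  rw [show 2 * Real.pi * ν * (τ + τ) = 2 ^ 2 * (Real.pi * ν * τ) by ring,
    Real.sqrt_mul (by positivity : (0:ℝ) ≤ 2^2), Real.sqrt_sq (by norm_num : (0:ℝ) ≤ 2),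
    Real.sqrt_mul (by positivity : (0:ℝ) ≤ Real.pi * ν),
    show -(a^2) / (2*ν*(τ+τ)) = -(a^2/(4*ν)/τ) by
      rw [div_div, show 2*ν*(τ+τ) = 4*ν*τ by ring, neg_div],
    show (-(1:ℝ)/2) = -((1:ℝ)/2) by norm_num, Real.rpow_neg hτ.le, ← Real.sqrt_eq_rpow]
  rw [one_div, one_div, mul_inv, mul_inv]
  ring

lemma part1 {ν : ℝ} (hν : 0 < ν) {t : ℝ} (ht0 : 0 ≤ t) (x y : ℝ) :
    (∫ r in (0:ℝ)..t, ∫ z : ℝ,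
        (heatKernel ν (t - r) (x - z) - heatKernel ν (t - r) (y - z)) ^ 2) ≤
      |x - y| / ν := by
  by_cases hxy : x = y
  · subst hxy
    simp only [sub_self, ne_eq, OfNat.ofNat_ne_zero, not_false_eq_true, zero_pow,
      integral_zero, intervalIntegral.integral_zero]
    positivity
  have ha : x - y ≠ 0 := sub_ne_zero.mpr hxy
  have ha2 : 0 < (x - y)^2 := by
    nlinarith [mul_pos (abs_pos.mpr ha) (abs_pos.mpr ha), sq_abs (x - y)]
  have hC : 0 < (x - y)^2 / (4*ν) := by positivity
  have hπ0 : (0:ℝ) < Real.sqrt Real.pi := Real.sqrt_pos.mpr Real.pi_pos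
  have hν0 : (0:ℝ) < Real.sqrt ν := Real.sqrt_pos.mpr hν
  have hπν : Real.sqrt (Real.pi * ν) = Real.sqrt Real.pi * Real.sqrt ν :=
    Real.sqrt_mul Real.pi_pos.le ν
  set C : ℝ := (x - y)^2 / (4*ν) with hCdef
  have hcong : Set.EqOn (fun r => ∫ z : ℝ,
        (heatKernel ν (t - r) (x - z) - heatKernel ν (t - r) (y - z)) ^ 2)
      (fun r => (1 / (Real.sqrt Real.pi * Real.sqrt ν)) *
        ((t - r) ^ (-(1:ℝ)/2) * (1 - Real.exp (-(C/(t - r)))))) (Set.uIcc 0 t) := by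
    intro r hr
    rw [Set.uIcc_of_le ht0] at hr
    rcases eq_or_lt_of_le (by linarith [hr.2] : 0 ≤ t - r) with h | h
    · dsimp only
      rw [show t - r = 0 from h.symm]
      simp [hk_nonpos le_rfl hν, Real.zero_rpow (by norm_num : (-(1:ℝ)/2) ≠ 0)]
    · dsimp only
      rw [integral_hk_sub_sq hν h h x y, hk_pair hν h, hk_pair_x hν h (x - y), hπν, hCdef]
      ring
  rw [intervalIntegral.integral_congr hcong, intervalIntegral.integral_const_mul,
    intervalIntegral.integral_comp_sub_left
      (fun u => u ^ (-(1:ℝ)/2) * (1 - Real.exp (-(C/u)))) t,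
    sub_self, sub_zero, intervalIntegral.integral_of_le ht0]
  have hnonneg : 0 ≤ᵐ[volume.restrict (Set.Ioi (0:ℝ))]
      (fun u : ℝ => u ^ (-(1:ℝ)/2) * (1 - Real.exp (-(C/u)))) := by
    filter_upwards [ae_restrict_mem measurableSet_Ioi] with u hu
    simp only [Pi.zero_apply]
    have hu0 : (0:ℝ) < u := hu
    exact mul_nonneg (Real.rpow_nonneg hu0.le _)
      (one_sub_exp_neg_nonneg (by positivity))
  have hmono : (∫ u in Set.Ioc (0:ℝ) t, u ^ (-(1:ℝ)/2) * (1 - Real.exp (-(C/u)))) ≤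
      ∫ u in Set.Ioi (0:ℝ), u ^ (-(1:ℝ)/2) * (1 - Real.exp (-(C/u))) :=
    setIntegral_mono_set (int_phi0 hC) hnonneg (Set.Ioc_subset_Ioi_self.eventuallyLE)
  have hval : (∫ u in Set.Ioi (0:ℝ), u ^ (-(1:ℝ)/2) * (1 - Real.exp (-(C/u)))) =
      2 * C * (Real.sqrt Real.pi / Real.sqrt C) := by
    rw [subst_val hC, ibp_val hC]
  have hsC : Real.sqrt C = |x - y| / (2 * Real.sqrt ν) := by
    rw [hCdef, Real.sqrt_div' ((x-y)^2) (by positivity : (0:ℝ) ≤ 4*ν),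
      Real.sqrt_sq_eq_abs, show (4:ℝ)*ν = 2^2*ν by ring,
      Real.sqrt_mul (by positivity : (0:ℝ) ≤ 2^2), Real.sqrt_sq (by norm_num : (0:ℝ) ≤ 2)]
  calc (1 / (Real.sqrt Real.pi * Real.sqrt ν)) *
        ∫ u in Set.Ioc (0:ℝ) t, u ^ (-(1:ℝ)/2) * (1 - Real.exp (-(C/u)))
      ≤ (1 / (Real.sqrt Real.pi * Real.sqrt ν)) *
        ∫ u in Set.Ioi (0:ℝ), u ^ (-(1:ℝ)/2) * (1 - Real.exp (-(C/u))) := by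
        apply mul_le_mul_of_nonneg_left hmono (by positivity)
    _ = (1 / (Real.sqrt Real.pi * Real.sqrt ν)) * (2 * C * (Real.sqrt Real.pi / Real.sqrt C)) := by
        rw [hval]
    _ = |x - y| / ν := by
        have hνν : Real.sqrt ν * Real.sqrt ν = ν := Real.mul_self_sqrt hν.le
        have haa : |x - y| * |x - y| = (x - y)^2 := by
          rw [← sq_abs]; ring
        have hA : |x - y| ≠ 0 := abs_ne_zero.mpr ha
        rw [hsC, hCdef, div_div_eq_mul_div]
        field_simp
        ring_nf
        linear_combination (-4) * haa

theorem stmt_16 (ν : ℝ) (hν : 0 < ν) (s t x y : ℝ) (hs : 0 ≤ s) (hst : s ≤ t) :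
    (∫ r in (0:ℝ)..t, ∫ z : ℝ,
        (heatKernel ν (t - r) (x - z) - heatKernel ν (t - r) (y - z)) ^ 2) ≤
      |x - y| / ν ∧
    (∫ r in (0:ℝ)..s, ∫ z : ℝ,
        (heatKernel ν (t - r) (x - z) - heatKernel ν (s - r) (x - z)) ^ 2) ≤
      ((Real.sqrt 2 - 1) / Real.sqrt Real.pi) * (Real.sqrt (t - s) / Real.sqrt ν) ∧
    (∫ r in s..t, ∫ z : ℝ, heatKernel ν (t - r) (x - z) ^ 2) =
      (1 / Real.sqrt Real.pi) * (Real.sqrt (t - s) / Real.sqrt ν) := by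
  exact ⟨part1 hν (le_trans hs hst) x y, part2 hν hs hst x, part3 hν hst x⟩
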